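/- For the syntactic pomset automaton A_Σ on sr-expressions, the following hold for all expressions e, f: L_Σ(0) = ∅; L_Σ(1) = {1}; L_Σ(a) = {a} for a ∈ Σ; L_Σ(e + f) = L_Σ(e) ∪ L_Σ(f); L_Σ(e · f) = L_Σ(e) · L_Σ(f); L_Σ(e ∥ f) = L_Σ(e) ∥ L_Σ(f); L_Σ(e*) = L_Σ(e)*. Consequently, L_Σ(e) = ⟦e⟧ for all sr-expressions e. -/

import Mathlib

namespace WBKA

/-- Series-parallel terms over an alphabet `A`. -/
inductive SPTerm (A : Type) : Type
  | one : SPTerm A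
  | atom : A → SPTerm A
  | seq : SPTerm A → SPTerm A → SPTerm A
  | par : SPTerm A → SPTerm A → SPTerm A

/-- The congruence generated by the series-parallel pomset axioms:
associativity of both compositions, commutativity of parallel composition,
and the empty pomset acting as unit for both. -/
inductive SPEquiv {A : Type} : SPTerm A → SPTerm A → Prop
  | refl (u : SPTerm A) : SPEquiv u u
  | symm {u v : SPTerm A} : SPEquiv u v → SPEquiv v u
  | trans {u v w : SPTerm A} : SPEquiv u v → SPEquiv v w → SPEquiv u w
  | seqCongr {u u' v v' : SPTerm A} :
      SPEquiv u u' → SPEquiv v v' → SPEquiv (u.seq v) (u'.seq v')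
  | parCongr {u u' v v' : SPTerm A} :
      SPEquiv u u' → SPEquiv v v' → SPEquiv (u.par v) (u'.par v')
  | seqAssoc (u v w : SPTerm A) : SPEquiv ((u.seq v).seq w) (u.seq (v.seq w))
  | parAssoc (u v w : SPTerm A) : SPEquiv ((u.par v).par w) (u.par (v.par w))
  | parComm (u v : SPTerm A) : SPEquiv (u.par v) (v.par u)
  | seqOneLeft (u : SPTerm A) : SPEquiv (SPTerm.one.seq u) u
  | seqOneRight (u : SPTerm A) : SPEquiv (u.seq SPTerm.one) u
  | parOne (u : SPTerm A) : SPEquiv (u.par SPTerm.one) u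

instance spSetoid (A : Type) : Setoid (SPTerm A) :=
  ⟨SPEquiv, SPEquiv.refl, SPEquiv.symm, SPEquiv.trans⟩

/-- Series-parallel pomsets over `A`, as the free algebra on the sp-pomset axioms. -/
def Pomset (A : Type) : Type := Quotient (spSetoid A)

namespace Pomset

variable {A : Type}

def mk (u : SPTerm A) : Pomset A := Quotient.mk (spSetoid A) u

/-- The empty pomset `1`. -/
def eps : Pomset A := mk SPTerm.one

/-- The primitive pomset consisting of a single event labelled `a`. -/
def atom (a : A) : Pomset A := mk (SPTerm.atom a)

/-- Sequential composition of pomsets. -/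
def seq : Pomset A → Pomset A → Pomset A :=
  Quotient.lift₂ (fun u v => mk (u.seq v))
    (fun _ _ _ _ hu hv => Quotient.sound (SPEquiv.seqCongr hu hv))

/-- Parallel composition of pomsets. -/
def par : Pomset A → Pomset A → Pomset A :=
  Quotient.lift₂ (fun u v => mk (u.par v))
    (fun _ _ _ _ hu hv => Quotient.sound (SPEquiv.parCongr hu hv))

/-- `U` is the empty pomset. -/
def IsEmptyP (U : Pomset A) : Prop := U = eps

/-- `U` is primitive: it consists of a single labelled event. -/
def Primitive (U : Pomset A) : Prop := ∃ a : A, U = atom a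

/-- `U` is sequential: a sequential composition of two non-empty pomsets. -/
def Sequential (U : Pomset A) : Prop :=
  ∃ V W : Pomset A, V ≠ eps ∧ W ≠ eps ∧ U = seq V W

/-- `U` is parallel: a parallel composition of two non-empty pomsets. -/
def Parallel (U : Pomset A) : Prop :=
  ∃ V W : Pomset A, V ≠ eps ∧ W ≠ eps ∧ U = par V W

/-- `U` is a sequential prime. -/
def SeqPrime (U : Pomset A) : Prop :=
  U ≠ eps ∧ ∀ V W : Pomset A, U = seq V W → V = eps ∨ W = eps

/-- `U` is a parallel prime. -/
def ParPrime (U : Pomset A) : Prop :=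
  U ≠ eps ∧ ∀ V W : Pomset A, U = par V W → V = eps ∨ W = eps

/-- Sequential product of a list of pomsets. -/
def seqProd (l : List (Pomset A)) : Pomset A := l.foldr seq eps

/-- Parallel product of a list of pomsets. -/
def parProd (l : List (Pomset A)) : Pomset A := l.foldr par eps

end Pomset

/-- Pointwise sequential composition of pomset languages. -/
def langSeq {A : Type} (L M : Set (Pomset A)) : Set (Pomset A) :=
  Set.image2 Pomset.seq L M

/-- Pointwise parallel composition of pomset languages. -/
def langPar {A : Type} (L M : Set (Pomset A)) : Set (Pomset A) :=
  Set.image2 Pomset.par L M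

/-- `n`-fold sequential power of a language. -/
def langPow {A : Type} (L : Set (Pomset A)) : ℕ → Set (Pomset A)
  | 0 => {Pomset.eps}
  | n + 1 => langSeq L (langPow L n)

/-- Kleene closure of a pomset language. -/
def langStar {A : Type} (L : Set (Pomset A)) : Set (Pomset A) :=
  ⋃ n : ℕ, langPow L n

/-- Series-rational expressions over `A`. -/
inductive SR (A : Type) : Type
  | zero : SR A
  | one : SR A
  | atom : A → SR A
  | plus : SR A → SR A → SR A
  | seq : SR A → SR A → SR A
  | par : SR A → SR A → SR A
  | star : SR A → SR A

/-- The sp-language semantics of series-rational expressions. -/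
def sem {A : Type} : SR A → Set (Pomset A)
  | .zero => ∅
  | .one => {Pomset.eps}
  | .atom a => {Pomset.atom a}
  | .plus e f => sem e ∪ sem f
  | .seq e f => langSeq (sem e) (sem f)
  | .par e f => langPar (sem e) (sem f)
  | .star e => langStar (sem e)

/-- The syntactic predicate `F` characterising acceptance of the empty pomset. -/
inductive EF {A : Type} : SR A → Prop
  | one : EF SR.one
  | plusLeft {e : SR A} (f : SR A) : EF e → EF (SR.plus e f)
  | plusRight (e : SR A) {f : SR A} : EF f → EF (SR.plus e f)
  | seq {e f : SR A} : EF e → EF f → EF (SR.seq e f)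
  | par {e f : SR A} : EF e → EF f → EF (SR.par e f)
  | star (e : SR A) : EF (SR.star e)

/-- Pomset automata. -/
structure PA (A : Type) (Q : Type) where
  acc : Set Q
  δ : Q → A → Set Q
  γ : Q → Multiset Q → Set Q

/-- The run relation of a pomset automaton. -/
inductive Run {A Q : Type} (M : PA A Q) : Q → Pomset A → Q → Prop
  | triv (q : Q) : Run M q Pomset.eps q
  | seqUnit {q : Q} {a : A} {q' : Q} :
      q' ∈ M.δ q a → Run M q (Pomset.atom a) q'
  | comp {q : Q} {U : Pomset A} {q'' : Q} {V : Pomset A} {q' : Q} :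
      Run M q U q'' → Run M q'' V q' → Run M q (U.seq V) q'
  | parUnit {q q' : Q} (l : List (Q × Pomset A × Q)) :
      q' ∈ M.γ q (↑(l.map Prod.fst) : Multiset Q) →
      (∀ x ∈ l, x.2.2 ∈ M.acc) →
      (∀ x ∈ l, Run M x.1 x.2.1 x.2.2) →
      Run M q (Pomset.parProd (l.map fun x => x.2.1)) q'

/-- Language of a state of a pomset automaton. -/
def PA.lang {A Q : Type} (M : PA A Q) (q : Q) : Set (Pomset A) :=
  {U | ∃ q' ∈ M.acc, Run M q U q'}

/-- The triple `q →^U q'` matches the trivial-run rule. -/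
def TrivialRun {A Q : Type} (_M : PA A Q) (q : Q) (U : Pomset A) (q' : Q) : Prop :=
  U = Pomset.eps ∧ q = q'

/-- `q →^U q'` is a sequential unit run. -/
def SeqUnitRun {A Q : Type} (M : PA A Q) (q : Q) (U : Pomset A) (q' : Q) : Prop :=
  ∃ a : A, U = Pomset.atom a ∧ q' ∈ M.δ q a

/-- `q →^U q'` is a parallel unit run. -/
def ParUnitRun {A Q : Type} (M : PA A Q) (q : Q) (U : Pomset A) (q' : Q) : Prop :=
  ∃ l : List (Q × Pomset A × Q),
    q' ∈ M.γ q (↑(l.map Prod.fst) : Multiset Q) ∧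
    (∀ x ∈ l, x.2.2 ∈ M.acc ∧ Run M x.1 x.2.1 x.2.2) ∧
    U = Pomset.parProd (l.map fun x => x.2.1)

/-- `q →^U q'` is a unit run: a sequential or a parallel unit run. -/
def UnitRun {A Q : Type} (M : PA A Q) (q : Q) (U : Pomset A) (q' : Q) : Prop :=
  SeqUnitRun M q U q' ∨ ParUnitRun M q U q'

/-- `q →^U q'` is a composite run: a sequential composition of two non-trivial runs. -/
def CompositeRun {A Q : Type} (M : PA A Q) (q : Q) (U : Pomset A) (q' : Q) : Prop :=
  ∃ (V W : Pomset A) (q'' : Q),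
    U = V.seq W ∧ Run M q V q'' ∧ Run M q'' W q' ∧
    ¬ TrivialRun M q V q'' ∧ ¬ TrivialRun M q'' W q'

/-- The support preorder: `Supports M q' q` means `q' ⪯ q`. -/
inductive Supports {A Q : Type} (M : PA A Q) : Q → Q → Prop
  | refl (q : Q) : Supports M q q
  | trans {q r p : Q} : Supports M q r → Supports M r p → Supports M q p
  | deltaStep {q : Q} {a : A} {q' : Q} : q' ∈ M.δ q a → Supports M q' q
  | gammaStep {q : Q} {φ : Multiset Q} {q' : Q} : q' ∈ M.γ q φ → Supports M q' q
  | forkStep {q : Q} {φ : Multiset Q} {r : Q} :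
      r ∈ φ → (M.γ q φ).Nonempty → Supports M r q

/-- A pomset automaton is fork-acyclic when every fork target `r` of `q`
satisfies `r ≺ q`, i.e. `q ⋠ r`. -/
def ForkAcyclic {A Q : Type} (M : PA A Q) : Prop :=
  ∀ (q : Q) (φ : Multiset Q) (r : Q),
    r ∈ φ → (M.γ q φ).Nonempty → ¬ Supports M q r

/-- A set of states is support-closed. -/
def SupportClosed {A Q : Type} (M : PA A Q) (S : Set Q) : Prop :=
  ∀ q ∈ S, ∀ q' : Q, Supports M q' q → q' ∈ S

/-- Restriction of a pomset automaton to a set of states. -/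
def PA.restrict {A Q : Type} (M : PA A Q) (S : Set Q) : PA A {q : Q // q ∈ S} where
  acc := {q | q.val ∈ M.acc}
  δ := fun q a => {r | r.val ∈ M.δ q.val a}
  γ := fun q φ => {r | r.val ∈ M.γ q.val (φ.map Subtype.val)}

/-- `n`-forking automata. -/
def NForking {A Q : Type} (M : PA A Q) (n : ℕ) : Prop :=
  ∀ (q : Q) (φ : Multiset Q), (M.γ q φ).Nonempty → n ≤ Multiset.card φ

/-- Parsimonious automata: no fork target accepts the empty pomset. -/
def Parsimonious {A Q : Type} (M : PA A Q) : Prop :=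
  ∀ (p : Q) (φ : Multiset Q) (q : Q),
    q ∈ φ → (M.γ p φ).Nonempty → Pomset.eps ∉ M.lang q

/-- Flat-branching automata: forks from fork targets never reach accepting states. -/
def FlatBranching {A Q : Type} (M : PA A Q) : Prop :=
  ∀ (p : Q) (φ : Multiset Q) (q : Q),
    q ∈ φ → (M.γ p φ).Nonempty → ∀ ψ : Multiset Q, M.γ q ψ ∩ M.acc = ∅

/-- Well-structured pomset automata. -/
def WellStructured {A Q : Type} (M : PA A Q) : Prop :=
  (∀ (q : Q) (φ : Multiset Q), (M.γ q φ).Nonempty → 2 ≤ Multiset.card φ) ∧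
  ∀ (p : Q) (φ : Multiset Q) (q : Q), q ∈ φ → (M.γ p φ).Nonempty →
    q ∉ M.acc ∧ ∀ ψ : Multiset Q, M.γ q ψ ∩ M.acc = ∅

/-- The relation `⇝` characterising runs labelled by the empty pomset. -/
inductive Leadsto {A Q : Type} (M : PA A Q) : Q → Q → Prop
  | refl (p : Q) : Leadsto M p p
  | trans {p r q : Q} : Leadsto M p r → Leadsto M r q → Leadsto M p q
  | fork {p q : Q} (l : List (Q × Q)) :
      q ∈ M.γ p (↑(l.map Prod.fst) : Multiset Q) →
      (∀ x ∈ l, x.2 ∈ M.acc) →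
      (∀ x ∈ l, Leadsto M x.1 x.2) →
      Leadsto M p q

/-- Concatenate each expression of a set with `f` on the right. -/
def seqAfter {A : Type} (T : Set (SR A)) (f : SR A) : Set (SR A) :=
  (fun g => SR.seq g f) '' T

/-- Antimirov-style sequential derivatives of sr-expressions. -/
def deltaS {A : Type} : SR A → A → Set (SR A)
  | .zero, _ => ∅
  | .one, _ => ∅
  | .atom b, a => {g | g = SR.one ∧ a = b}
  | .plus e f, a => deltaS e a ∪ deltaS f a
  | .seq e f, a => seqAfter (deltaS e a) f ∪ {g | g ∈ deltaS f a ∧ EF e}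
  | .par _ _, _ => ∅
  | .star e, a => seqAfter (deltaS e a) (SR.star e)

/-- Antimirov-style parallel derivatives of sr-expressions. -/
def gammaS {A : Type} : SR A → Multiset (SR A) → Set (SR A)
  | .zero, _ => ∅
  | .one, _ => ∅
  | .atom _, _ => ∅
  | .plus e f, φ => gammaS e φ ∪ gammaS f φ
  | .seq e f, φ => seqAfter (gammaS e φ) f ∪ {g | g ∈ gammaS f φ ∧ EF e}
  | .par e f, φ => {g | g = SR.one ∧ φ = {e, f}}
  | .star e, φ => seqAfter (gammaS e φ) (SR.star e)

/-- The syntactic pomset automaton on sr-expressions. -/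
def synPA (A : Type) : PA A (SR A) where
  acc := {e | EF e}
  δ := deltaS
  γ := gammaS

/-- The parallel-nesting depth of an sr-expression. -/
def pdepth {A : Type} : SR A → ℕ
  | .zero => 0
  | .one => 0
  | .atom _ => 0
  | .plus e f => max (pdepth e) (pdepth f)
  | .seq e f => max (pdepth e) (pdepth f)
  | .par e f => max (pdepth e) (pdepth f) + 1
  | .star e => pdepth e

/-- A substitution `ζ : Σ → 2^{SP(Δ)}` is atomic. -/
def Atomic {A B : Type} (ζ : A → Set (Pomset B)) : Prop :=
  (∀ a : A, ∀ U ∈ ζ a, Pomset.SeqPrime U) ∧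
  (∀ a b : A, (ζ a ∩ ζ b).Nonempty ↔ a = b)

/-- Extension of a substitution to words. -/
def substWord {A B : Type} (ζ : A → Set (Pomset B)) : List A → Set (Pomset B)
  | [] => {Pomset.eps}
  | a :: w => langSeq (ζ a) (substWord ζ w)

/-- Extension of a substitution to word languages. -/
def substLang {A B : Type} (ζ : A → Set (Pomset B)) (L : Set (List A)) :
    Set (Pomset B) :=
  ⋃ w ∈ L, substWord ζ w

/-- `L_A(α)` for a set `α` of states: the atom language of `α`. -/
def atomLang {Q U : Type} (LA : Q → Set U) (α : Set Q) : Set U :=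
  (⋂ q ∈ α, LA q) \ (⋃ (q : Q) (_ : q ∉ α), LA q)


namespace Pomset

variable {A : Type}

@[simp] lemma seq_eps_left (U : Pomset A) : seq eps U = U :=
  Quotient.inductionOn U fun u => Quotient.sound (SPEquiv.seqOneLeft u)

@[simp] lemma seq_eps_right (U : Pomset A) : seq U eps = U :=
  Quotient.inductionOn U fun u => Quotient.sound (SPEquiv.seqOneRight u)

lemma seq_assoc (U V W : Pomset A) : seq (seq U V) W = seq U (seq V W) :=
  Quotient.inductionOn₃ U V W fun u v w => Quotient.sound (SPEquiv.seqAssoc u v w)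

@[simp] lemma par_eps_right (U : Pomset A) : par U eps = U :=
  Quotient.inductionOn U fun u => Quotient.sound (SPEquiv.parOne u)

lemma par_comm (U V : Pomset A) : par U V = par V U :=
  Quotient.inductionOn₂ U V fun u v => Quotient.sound (SPEquiv.parComm u v)

lemma parProd_pair (U V : Pomset A) : parProd [U, V] = par U V := by
  show par U (par V eps) = par U V
  rw [par_eps_right]

end Pomset

lemma eps_mem_sem {A : Type} {e : SR A} (h : EF e) : Pomset.eps ∈ sem e := by
  induction h with
  | one => rfl
  | plusLeft f h ih => exact Or.inl ih
  | plusRight e h ih => exact Or.inr ih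
  | seq h1 h2 ih1 ih2 => exact ⟨_, ih1, _, ih2, Pomset.seq_eps_right _⟩
  | par h1 h2 ih1 ih2 => exact ⟨_, ih1, _, ih2, Pomset.par_eps_right _⟩
  | star e => exact Set.mem_iUnion.2 ⟨0, rfl⟩

lemma delta_sound {A : Type} (e : SR A) :
    ∀ (a : A) (g : SR A), g ∈ deltaS e a →
      ∀ V ∈ sem g, (Pomset.atom a).seq V ∈ sem e := by
  induction e with
  | zero => intro a g hg; exact absurd hg (Set.notMem_empty _)
  | one => intro a g hg; exact absurd hg (Set.notMem_empty _)
  | atom b =>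
    rintro a g ⟨rfl, rfl⟩ V hV
    simp only [sem, Set.mem_singleton_iff] at hV; subst hV
    rw [Pomset.seq_eps_right]; rfl
  | plus e f ihe ihf =>
    rintro a g (hg | hg) V hV
    · exact Or.inl (ihe a g hg V hV)
    · exact Or.inr (ihf a g hg V hV)
  | seq e f ihe ihf =>
    rintro a g (⟨g', hg', rfl⟩ | ⟨hg, hef⟩) V hV
    · rcases hV with ⟨V1, hV1, V2, hV2, rfl⟩
      rw [← Pomset.seq_assoc]
      exact ⟨_, ihe a g' hg' V1 hV1, _, hV2, rfl⟩
    · exact ⟨_, eps_mem_sem hef, _, ihf a g hg V hV, Pomset.seq_eps_left _⟩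
  | par e f ihe ihf => intro a g hg; exact absurd hg (Set.notMem_empty _)
  | star e ihe =>
    rintro a g ⟨g', hg', rfl⟩ V hV
    rcases hV with ⟨V1, hV1, V2, hV2, rfl⟩
    rcases Set.mem_iUnion.1 hV2 with ⟨n, hn⟩
    rw [← Pomset.seq_assoc]
    exact Set.mem_iUnion.2 ⟨n + 1, ⟨_, ihe a g' hg' V1 hV1, _, hn, rfl⟩⟩

lemma gamma_sound {A : Type} (e : SR A) :
    ∀ (φ : Multiset (SR A)) (g : SR A), g ∈ gammaS e φ →
      ∀ l : List (SR A × Pomset A), (↑(l.map Prod.fst) : Multiset (SR A)) = φ →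
        (∀ x ∈ l, x.2 ∈ sem x.1) →
        ∀ V ∈ sem g, (Pomset.parProd (l.map Prod.snd)).seq V ∈ sem e := by
  induction e with
  | zero => intro φ g hg; exact absurd hg (Set.notMem_empty _)
  | one => intro φ g hg; exact absurd hg (Set.notMem_empty _)
  | atom b => intro φ g hg; exact absurd hg (Set.notMem_empty _)
  | plus e f ihe ihf =>
    rintro φ g (hg | hg) l hl hmem V hV
    · exact Or.inl (ihe φ g hg l hl hmem V hV)
    · exact Or.inr (ihf φ g hg l hl hmem V hV)
  | seq e f ihe ihf =>
    rintro φ g (⟨g', hg', rfl⟩ | ⟨hg, hef⟩) l hl hmem V hV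
    · rcases hV with ⟨V1, hV1, V2, hV2, rfl⟩
      rw [← Pomset.seq_assoc]
      exact ⟨_, ihe φ g' hg' l hl hmem V1 hV1, _, hV2, rfl⟩
    · exact ⟨_, eps_mem_sem hef, _, ihf φ g hg l hl hmem V hV, Pomset.seq_eps_left _⟩
  | par e f ihe ihf =>
    rintro φ g ⟨rfl, rfl⟩ l hl hmem V hV
    simp only [sem, Set.mem_singleton_iff] at hV; subst hV
    have hlen : l.length = 2 := by
      have := congrArg Multiset.card hl
      simpa using this
    match l, hlen with
    | [x, y], _ =>
      have hl' : (x.1 ::ₘ {y.1} : Multiset (SR A)) = e ::ₘ {f} := by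
        exact hl
      have hmx : x.2 ∈ sem x.1 := hmem x (by simp)
      have hmy : y.2 ∈ sem y.1 := hmem y (by simp)
      have hgoal : Pomset.parProd ([x, y].map Prod.snd) = x.2.par y.2 := by
        simpa using Pomset.parProd_pair x.2 y.2
      rw [Pomset.seq_eps_right, hgoal]
      have hx : x.1 = e ∨ x.1 = f := by
        have : x.1 ∈ (e ::ₘ {f} : Multiset (SR A)) := by
          rw [← hl']; exact Multiset.mem_cons_self _ _
        simpa using this
      rcases hx with rfl | rfl
      · have : ({y.1} : Multiset (SR A)) = {f} := by
          exact (Multiset.cons_inj_right _).1 hl'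
        have hy : y.1 = f := by simpa using this
        subst hy
        exact ⟨_, hmx, _, hmy, rfl⟩
      · have hl'' : (x.1 ::ₘ {y.1} : Multiset (SR A)) = x.1 ::ₘ {e} := by
          rw [hl']; exact Multiset.cons_swap e x.1 {} ▸ rfl
        have : ({y.1} : Multiset (SR A)) = {e} := (Multiset.cons_inj_right _).1 hl''
        have hy : y.1 = e := by simpa using this
        subst hy
        rw [Pomset.par_comm]
        exact ⟨_, hmy, _, hmx, rfl⟩
  | star e ihe =>
    rintro φ g ⟨g', hg', rfl⟩ l hl hmem V hV
    rcases hV with ⟨V1, hV1, V2, hV2, rfl⟩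
    rcases Set.mem_iUnion.1 hV2 with ⟨n, hn⟩
    rw [← Pomset.seq_assoc]
    exact Set.mem_iUnion.2 ⟨n + 1, ⟨_, ihe φ g' hg' l hl hmem V1 hV1, _, hn, rfl⟩⟩

lemma run_sound {A : Type} {e : SR A} {U : Pomset A} {f : SR A}
    (h : Run (synPA A) e U f) : ∀ V ∈ sem f, U.seq V ∈ sem e := by
  induction h with
  | triv q => intro V hV; rw [Pomset.seq_eps_left]; exact hV
  | seqUnit hd => intro V hV; exact delta_sound _ _ _ hd V hV
  | comp r1 r2 ih1 ih2 => intro V hV; rw [Pomset.seq_assoc]; exact ih1 _ (ih2 _ hV)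
  | @parUnit q q' l hγ hacc hrun ih =>
    intro V hV
    have hmem : ∀ x ∈ l.map (fun x => (x.1, x.2.1)), x.2 ∈ sem x.1 := by
      intro y hy
      rcases List.mem_map.1 hy with ⟨x, hx, rfl⟩
      have := ih x hx Pomset.eps (eps_mem_sem (hacc x hx))
      rwa [Pomset.seq_eps_right] at this
    have h1 : ((((l.map (fun x => (x.1, x.2.1))).map Prod.fst) : List (SR A)) : Multiset (SR A))
        = ↑(l.map Prod.fst) := by
      congr 1; rw [List.map_map]; rfl
    have := gamma_sound _ _ _ hγ (l.map fun x => (x.1, x.2.1)) h1 hmem V hV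
    have h2 : (l.map fun x => (x.1, x.2.1)).map Prod.snd = l.map fun x => x.2.1 := by
      rw [List.map_map]; rfl
    rwa [h2] at this

lemma run_head {A : Type} {e : SR A} {U : Pomset A} {g : SR A}
    (h : Run (synPA A) e U g) :
    (U = Pomset.eps ∧ g = e) ∨
    (∃ (a : A) (e' : SR A) (V : Pomset A), e' ∈ deltaS e a ∧
      U = (Pomset.atom a).seq V ∧ Run (synPA A) e' V g) ∨
    (∃ (l : List (SR A × Pomset A × SR A)) (e' : SR A) (V : Pomset A),
      e' ∈ gammaS e (↑(l.map Prod.fst) : Multiset (SR A)) ∧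
      (∀ x ∈ l, EF x.2.2 ∧ Run (synPA A) x.1 x.2.1 x.2.2) ∧
      U = (Pomset.parProd (l.map fun x => x.2.1)).seq V ∧ Run (synPA A) e' V g) := by
  induction h with
  | triv q => exact Or.inl ⟨rfl, rfl⟩
  | seqUnit hd =>
    exact Or.inr (Or.inl ⟨_, _, Pomset.eps, hd, (Pomset.seq_eps_right _).symm, Run.triv _⟩)
  | comp r1 r2 ih1 ih2 =>
    rcases ih1 with ⟨rfl, rfl⟩ | ⟨a, e', V', he', rfl, r'⟩ | ⟨l, e', V', he', hl, rfl, r'⟩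
    · rw [Pomset.seq_eps_left]
      exact ih2
    · refine Or.inr (Or.inl ⟨a, e', V'.seq _, he', ?_, Run.comp r' r2⟩)
      rw [Pomset.seq_assoc]
    · refine Or.inr (Or.inr ⟨l, e', V'.seq _, he', hl, ?_, Run.comp r' r2⟩)
      rw [Pomset.seq_assoc]
  | parUnit l hγ hacc hrun ih =>
    exact Or.inr (Or.inr ⟨l, _, Pomset.eps, hγ, fun x hx => ⟨hacc x hx, hrun x hx⟩,
      (Pomset.seq_eps_right _).symm, Run.triv _⟩)

lemma run_transfer {A : Type} {e e₂ : SR A}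
    (hd : ∀ a : A, deltaS e a ⊆ deltaS e₂ a)
    (hg : ∀ φ : Multiset (SR A), gammaS e φ ⊆ gammaS e₂ φ)
    {U : Pomset A} {g : SR A} (h : Run (synPA A) e U g) :
    (U = Pomset.eps ∧ g = e) ∨ Run (synPA A) e₂ U g := by
  rcases run_head h with ⟨hU, hg'⟩ | ⟨a, e', V, he', hU, hr⟩ | ⟨l, e', V, he', hl, hU, hr⟩
  · exact Or.inl ⟨hU, hg'⟩
  · rw [hU]; exact Or.inr (Run.comp (Run.seqUnit (hd a he')) hr)
  · rw [hU]
    exact Or.inr (Run.comp (Run.parUnit l (hg _ he')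
      (fun x hx => (hl x hx).1) (fun x hx => (hl x hx).2)) hr)

lemma run_seq_lift {A : Type} {e : SR A} {U : Pomset A} {g : SR A} (f : SR A)
    (h : Run (synPA A) e U g) : Run (synPA A) (e.seq f) U (g.seq f) := by
  induction h with
  | triv q => exact Run.triv _
  | seqUnit hd => exact Run.seqUnit (Or.inl ⟨_, hd, rfl⟩)
  | comp r1 r2 ih1 ih2 => exact Run.comp ih1 ih2
  | parUnit l hγ hacc hrun ih => exact Run.parUnit l (Or.inl ⟨_, hγ, rfl⟩) hacc hrun

lemma sem_sub_lang {A : Type} (e : SR A) : sem e ⊆ (synPA A).lang e := by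
  induction e with
  | zero => intro U hU; exact absurd hU (Set.notMem_empty _)
  | one =>
    intro U hU; simp only [sem, Set.mem_singleton_iff] at hU; subst hU
    exact ⟨SR.one, EF.one, Run.triv _⟩
  | atom a =>
    intro U hU; simp only [sem, Set.mem_singleton_iff] at hU; subst hU
    exact ⟨SR.one, EF.one, Run.seqUnit ⟨rfl, rfl⟩⟩
  | plus e f ihe ihf =>
    rintro U (hU | hU)
    · rcases ihe hU with ⟨g, hg, r⟩
      rcases run_transfer (e₂ := SR.plus e f)
        (fun a x hx => show x ∈ deltaS e a ∪ deltaS f a from Or.inl hx)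
        (fun φ x hx => show x ∈ gammaS e φ ∪ gammaS f φ from Or.inl hx) r with ⟨rfl, rfl⟩ | r'
      · exact ⟨_, EF.plusLeft f hg, Run.triv _⟩
      · exact ⟨g, hg, r'⟩
    · rcases ihf hU with ⟨g, hg, r⟩
      rcases run_transfer (e₂ := SR.plus e f)
        (fun a x hx => show x ∈ deltaS e a ∪ deltaS f a from Or.inr hx)
        (fun φ x hx => show x ∈ gammaS e φ ∪ gammaS f φ from Or.inr hx) r with ⟨rfl, rfl⟩ | r'
      · exact ⟨_, EF.plusRight e hg, Run.triv _⟩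
      · exact ⟨g, hg, r'⟩
  | seq e f ihe ihf =>
    rintro U ⟨U1, hU1, U2, hU2, rfl⟩
    rcases ihe hU1 with ⟨g, hg, r1⟩
    rcases ihf hU2 with ⟨h, hh, r2⟩
    have lift := run_seq_lift f r1
    rcases run_transfer (e₂ := SR.seq g f) (fun a x hx => Or.inr ⟨hx, hg⟩)
      (fun φ x hx => Or.inr ⟨hx, hg⟩) r2 with ⟨rfl, rfl⟩ | r2'
    · exact ⟨_, EF.seq hg hh, by rw [Pomset.seq_eps_right]; exact lift⟩
    · exact ⟨h, hh, Run.comp lift r2'⟩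
  | par e f ihe ihf =>
    rintro U ⟨U1, hU1, U2, hU2, rfl⟩
    rcases ihe hU1 with ⟨g, hg, r1⟩
    rcases ihf hU2 with ⟨h, hh, r2⟩
    refine ⟨SR.one, EF.one, ?_⟩
    have hrun := Run.parUnit (M := synPA A) (q := SR.par e f) (q' := SR.one)
      [(e, U1, g), (f, U2, h)] ⟨rfl, rfl⟩
      (by
        intro x hx
        simp only [List.mem_cons, List.not_mem_nil, or_false] at hx
        rcases hx with rfl | rfl
        · exact hg
        · exact hh)
      (by
        intro x hx
        simp only [List.mem_cons, List.not_mem_nil, or_false] at hx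
        rcases hx with rfl | rfl
        · exact r1
        · exact r2)
    have hlab : Pomset.parProd ([(e, U1, g), (f, U2, h)].map fun x => x.2.1)
        = U1.par U2 := by
      simpa using Pomset.parProd_pair U1 U2
    rwa [hlab] at hrun
  | star e ihe =>
    suffices h : ∀ (n : ℕ) (U : Pomset A), U ∈ langPow (sem e) n →
        U ∈ (synPA A).lang (SR.star e) by
      intro U hU
      rcases Set.mem_iUnion.1 hU with ⟨n, hn⟩
      exact h n U hn
    intro n
    induction n with
    | zero =>
      intro U hn
      simp only [langPow, Set.mem_singleton_iff] at hn; subst hn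
      exact ⟨SR.star e, EF.star e, Run.triv _⟩
    | succ n ihn =>
      rintro U ⟨U1, hU1, U2, hU2, rfl⟩
      rcases ihe hU1 with ⟨g, hg, r1⟩
      rcases ihn U2 hU2 with ⟨h, hh, r2⟩
      rcases run_head r1 with ⟨rfl, rfl⟩ | ⟨a, e', V, he', rfl, r1'⟩ | ⟨l, e', V, he', hl, rfl, r1'⟩
      · rw [Pomset.seq_eps_left]; exact ⟨h, hh, r2⟩
      · have lift := run_seq_lift (SR.star e) r1'
        have hd : SR.seq e' (SR.star e) ∈ deltaS (SR.star e) a := ⟨e', he', rfl⟩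
        rcases run_transfer (e₂ := SR.seq g (SR.star e)) (fun a x hx => Or.inr ⟨hx, hg⟩)
          (fun φ x hx => Or.inr ⟨hx, hg⟩) r2 with ⟨rfl, rfl⟩ | r2'
        · refine ⟨g.seq (SR.star e), EF.seq hg (EF.star e), ?_⟩
          rw [Pomset.seq_eps_right]
          exact Run.comp (Run.seqUnit hd) lift
        · exact ⟨h, hh, Run.comp (Run.comp (Run.seqUnit hd) lift) r2'⟩
      · have lift := run_seq_lift (SR.star e) r1'
        have hγ : SR.seq e' (SR.star e) ∈ gammaS (SR.star e) ↑(l.map Prod.fst) :=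
          ⟨e', he', rfl⟩
        have head := Run.parUnit (M := synPA A) (q := SR.star e) l hγ
          (fun x hx => (hl x hx).1) (fun x hx => (hl x hx).2)
        rcases run_transfer (e₂ := SR.seq g (SR.star e)) (fun a x hx => Or.inr ⟨hx, hg⟩)
          (fun φ x hx => Or.inr ⟨hx, hg⟩) r2 with ⟨rfl, rfl⟩ | r2'
        · refine ⟨g.seq (SR.star e), EF.seq hg (EF.star e), ?_⟩
          rw [Pomset.seq_eps_right]
          exact Run.comp head lift
        · exact ⟨h, hh, Run.comp (Run.comp head lift) r2'⟩

lemma lang_eq_sem {A : Type} (e : SR A) : (synPA A).lang e = sem e := by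
  apply Set.Subset.antisymm
  · rintro U ⟨f, hf, r⟩
    have := run_sound r Pomset.eps (eps_mem_sem hf)
    rwa [Pomset.seq_eps_right] at this
  · exact sem_sub_lang e

/-- The language function of the syntactic pomset automaton is a homomorphism,
and consequently agrees with the semantics of sr-expressions. -/
theorem syntactic_pa_correct {A : Type} :
    (synPA A).lang SR.zero = ∅ ∧
    (synPA A).lang SR.one = {Pomset.eps} ∧
    (∀ a : A, (synPA A).lang (SR.atom a) = {Pomset.atom a}) ∧
    (∀ e f : SR A,
      (synPA A).lang (SR.plus e f) = (synPA A).lang e ∪ (synPA A).lang f) ∧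
    (∀ e f : SR A,
      (synPA A).lang (SR.seq e f) = langSeq ((synPA A).lang e) ((synPA A).lang f)) ∧
    (∀ e f : SR A,
      (synPA A).lang (SR.par e f) = langPar ((synPA A).lang e) ((synPA A).lang f)) ∧
    (∀ e : SR A, (synPA A).lang (SR.star e) = langStar ((synPA A).lang e)) ∧
    (∀ e : SR A, (synPA A).lang e = sem e) := by
  refine ⟨?_, ?_, fun a => ?_, fun e f => ?_, fun e f => ?_, fun e f => ?_,
    fun e => ?_, fun e => lang_eq_sem e⟩ <;> simp only [lang_eq_sem, sem]

end WBKA
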